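/- Let U ∈ ℝ^{n×m} and Ũ = U + E ∈ ℝ^{n×m}, set M = ŨᵀŨ and P = ŨᵀŨ − UᵀU, and assume both UᵀU and M are positive definite. Let c* be the unique minimizer of ‖Uc‖₂ over c ∈ ℝ^m with 𝟏ᵀc = 1, and let c* + Δc be the unique minimizer of ‖Ũc‖₂ over c ∈ ℝ^m with 𝟏ᵀc = 1. Then Δc = −(I − M⁻¹𝟏𝟏ᵀ/(𝟏ᵀM⁻¹𝟏)) M⁻¹ P c*. -/

import Mathlib

open Matrix

/-- The Euclidean (ℓ₂) norm of a vector in `ℝⁿ`. -/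
noncomputable def euclNorm {n : ℕ} (v : Fin n → ℝ) : ℝ := Real.sqrt (∑ i, v i ^ 2)

lemma quad_of_norm {n m : ℕ} (A : Matrix (Fin n) (Fin m) ℝ) (a b : Fin m → ℝ)
    (h : euclNorm (A *ᵥ a) ≤ euclNorm (A *ᵥ b)) :
    a ⬝ᵥ (Aᵀ * A) *ᵥ a ≤ b ⬝ᵥ (Aᵀ * A) *ᵥ b := by
  have key : ∀ v : Fin m → ℝ, v ⬝ᵥ (Aᵀ * A) *ᵥ v = ∑ i, (A *ᵥ v) i ^ 2 := by
    intro v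
    rw [← Matrix.mulVec_mulVec, Matrix.dotProduct_mulVec, Matrix.vecMul_transpose]
    simp [dotProduct, sq]
  rw [key, key]
  exact (Real.sqrt_le_sqrt_iff (Finset.sum_nonneg fun i _ => sq_nonneg _)).mp h

lemma quad_min_char {m : ℕ} (N : Matrix (Fin m) (Fin m) ℝ) (hN : N.PosDef)
    (c : Fin m → ℝ) (hc : ∑ i, c i = 1)
    (hmin : ∀ c' : Fin m → ℝ, ∑ i, c' i = 1 → c ⬝ᵥ N *ᵥ c ≤ c' ⬝ᵥ N *ᵥ c') :
    c = ((fun _ => (1:ℝ)) ⬝ᵥ N⁻¹ *ᵥ (fun _ => (1:ℝ)))⁻¹ • (N⁻¹ *ᵥ (fun _ => (1:ℝ))) := by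
  set s : Fin m → ℝ := fun _ => (1:ℝ) with hs
  have hsne : s ≠ 0 := by
    intro h
    have hm : m ≠ 0 := by rintro rfl; simp at hc
    obtain ⟨i⟩ := Fin.pos_iff_nonempty.mp (Nat.pos_of_ne_zero hm)
    have := congrFun h i
    simp [hs] at this
  have hinv : N⁻¹.PosDef := hN.inv
  have hα : 0 < s ⬝ᵥ N⁻¹ *ᵥ s := by simpa using hinv.dotProduct_mulVec_pos hsne
  set α := s ⬝ᵥ N⁻¹ *ᵥ s with hαdef
  set c0 : Fin m → ℝ := α⁻¹ • (N⁻¹ *ᵥ s) with hc0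
  have hNdet : IsUnit N.det := (Matrix.isUnit_iff_isUnit_det N).mp hN.isUnit
  have hNN : N * N⁻¹ = 1 := Matrix.mul_nonsing_inv N hNdet
  have hNc0 : N *ᵥ c0 = α⁻¹ • s := by
    rw [hc0, Matrix.mulVec_smul, Matrix.mulVec_mulVec, hNN, Matrix.one_mulVec]
  have hsum0 : ∑ i, c0 i = 1 := by
    have : s ⬝ᵥ c0 = 1 := by
      rw [hc0, dotProduct_smul, hαdef, smul_eq_mul, inv_mul_cancel₀ hα.ne']
    simpa [hs, dotProduct] using this
  set w : Fin m → ℝ := c - c0 with hw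
  have hsw : s ⬝ᵥ w = 0 := by
    have : s ⬝ᵥ w = (∑ i, c i) - (∑ i, c0 i) := by
      simp [hw, dotProduct, hs, Finset.sum_sub_distrib]
    rw [this, hc, hsum0, sub_self]
  have hcross : w ⬝ᵥ N *ᵥ c0 = 0 := by
    rw [hNc0, dotProduct_smul, dotProduct_comm, hsw, smul_zero]
  have hNsymm : Nᵀ = N := by
    have := hN.isHermitian.eq
    rwa [Matrix.conjTranspose_eq_transpose_of_trivial] at this
  have hcross' : c0 ⬝ᵥ N *ᵥ w = 0 := by
    have h1 : c0 ᵥ* N = N *ᵥ c0 := by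
      rw [← Matrix.mulVec_transpose, hNsymm]
    rw [dotProduct_mulVec, h1, hNc0, smul_dotProduct, hsw, smul_zero]
  have hcw : c = c0 + w := by simp [hw]
  have hquad : c ⬝ᵥ N *ᵥ c = c0 ⬝ᵥ N *ᵥ c0 + w ⬝ᵥ N *ᵥ w := by
    rw [hcw, Matrix.mulVec_add, add_dotProduct, dotProduct_add, dotProduct_add,
      hcross, hcross']
    ring
  have hle := hmin c0 hsum0
  have hwNw : w ⬝ᵥ N *ᵥ w ≤ 0 := by linarith [hquad ▸ hle]
  have hw0 : w = 0 := by
    by_contra h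
    have := hN.dotProduct_mulVec_pos h
    simp only [star_trivial] at this
    linarith
  rw [hcw, hw0, add_zero, hc0]

/-- Perturbation of the AMPE solution: if `c*` minimizes `‖Uc‖₂` over `𝟏ᵀc = 1`
and `c* + Δc` minimizes `‖Ũc‖₂` over `𝟏ᵀc = 1` with `Ũ = U + E`, `M = ŨᵀŨ`, `P = ŨᵀŨ − UᵀU`,
then `Δc = −(I − M⁻¹𝟏𝟏ᵀ/(𝟏ᵀM⁻¹𝟏)) M⁻¹ P c*`. -/
theorem ampe_perturbation {n m : ℕ} (U E Ut : Matrix (Fin n) (Fin m) ℝ)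
    (hUt : Ut = U + E)
    (M : Matrix (Fin m) (Fin m) ℝ) (hM : M = Utᵀ * Ut)
    (P : Matrix (Fin m) (Fin m) ℝ) (hP : P = Utᵀ * Ut - Uᵀ * U)
    (hUpd : (Uᵀ * U).PosDef) (hMpd : M.PosDef)
    (cstar Δc : Fin m → ℝ)
    (hc1 : ∑ i, cstar i = 1)
    (hcmin : ∀ c : Fin m → ℝ, ∑ i, c i = 1 →
      euclNorm (U.mulVec cstar) ≤ euclNorm (U.mulVec c))
    (hd1 : ∑ i, (cstar + Δc) i = 1)
    (hdmin : ∀ c : Fin m → ℝ, ∑ i, c i = 1 →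
      euclNorm (Ut.mulVec (cstar + Δc)) ≤ euclNorm (Ut.mulVec c)) :
    Δc = -((1 - ((fun _ => (1 : ℝ)) ⬝ᵥ M⁻¹ *ᵥ (fun _ => (1 : ℝ)))⁻¹ •
        (M⁻¹ * Matrix.of (fun _ _ => (1 : ℝ)))) * M⁻¹ * P) *ᵥ cstar := by
  set s : Fin m → ℝ := fun _ => (1 : ℝ) with hs
  set N : Matrix (Fin m) (Fin m) ℝ := Uᵀ * U with hN
  -- characterizations of the two minimizers
  have hcchar : cstar = (s ⬝ᵥ N⁻¹ *ᵥ s)⁻¹ • (N⁻¹ *ᵥ s) :=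
    quad_min_char N hUpd cstar hc1 (fun c' h => quad_of_norm U cstar c' (hcmin c' h))
  have hdchar : cstar + Δc = (s ⬝ᵥ M⁻¹ *ᵥ s)⁻¹ • (M⁻¹ *ᵥ s) := by
    refine quad_min_char M hMpd (cstar + Δc) hd1 (fun c' h => ?_)
    rw [hM]; exact quad_of_norm Ut _ c' (hdmin c' h)
  -- notation
  have hsne : s ≠ 0 := by
    intro h
    have hm : m ≠ 0 := by rintro rfl; simp at hc1
    obtain ⟨i⟩ := Fin.pos_iff_nonempty.mp (Nat.pos_of_ne_zero hm)
    have := congrFun h i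
    simp [hs] at this
  have hα : 0 < s ⬝ᵥ N⁻¹ *ᵥ s := by simpa using hUpd.inv.dotProduct_mulVec_pos hsne
  have hβ : 0 < s ⬝ᵥ M⁻¹ *ᵥ s := by simpa using hMpd.inv.dotProduct_mulVec_pos hsne
  set α := s ⬝ᵥ N⁻¹ *ᵥ s with hαdef
  set β := s ⬝ᵥ M⁻¹ *ᵥ s with hβdef
  set u : Fin m → ℝ := M⁻¹ *ᵥ s with hu
  -- invertibility facts
  have hNdet : IsUnit N.det := (Matrix.isUnit_iff_isUnit_det N).mp hUpd.isUnit
  have hMdet : IsUnit M.det := (Matrix.isUnit_iff_isUnit_det M).mp hMpd.isUnit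
  have hNN : N * N⁻¹ = 1 := Matrix.mul_nonsing_inv N hNdet
  have hMM : M⁻¹ * M = 1 := Matrix.nonsing_inv_mul M hMdet
  -- N *ᵥ cstar
  have hNc : N *ᵥ cstar = α⁻¹ • s := by
    rw [hcchar, Matrix.mulVec_smul, Matrix.mulVec_mulVec, hNN, Matrix.one_mulVec]
  -- P *ᵥ cstar
  have hPM : P = M - N := by rw [hP, hM, hN]
  have hPc : P *ᵥ cstar = M *ᵥ cstar - α⁻¹ • s := by
    rw [hPM, Matrix.sub_mulVec, hNc]
  set x : Fin m → ℝ := M⁻¹ *ᵥ (P *ᵥ cstar) with hx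
  have hxval : x = cstar - α⁻¹ • u := by
    rw [hx, hPc, Matrix.mulVec_sub, Matrix.mulVec_mulVec, hMM, Matrix.one_mulVec,
      Matrix.mulVec_smul, hu]
  -- sum of x
  have hsx : s ⬝ᵥ x = 1 - α⁻¹ * β := by
    rw [hxval]
    have h1 : s ⬝ᵥ (cstar - α⁻¹ • u) = s ⬝ᵥ cstar - α⁻¹ * (s ⬝ᵥ u) := by
      rw [dotProduct_sub, dotProduct_smul, smul_eq_mul]
    rw [h1]
    have h2 : s ⬝ᵥ cstar = 1 := by simpa [hs, dotProduct] using hc1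
    rw [h2, hu, ← hβdef]
  -- J *ᵥ x
  have hJx : (Matrix.of (fun _ _ => (1:ℝ)) : Matrix (Fin m) (Fin m) ℝ) *ᵥ x = (s ⬝ᵥ x) • s := by
    funext i
    simp [Matrix.mulVec, dotProduct, hs]
  -- compute RHS
  have hrhs : -((1 - β⁻¹ • (M⁻¹ * Matrix.of (fun _ _ => (1:ℝ)))) * M⁻¹ * P) *ᵥ cstar
      = -(x - (β⁻¹ * (1 - α⁻¹ * β)) • u) := by
    rw [Matrix.neg_mulVec]
    congr 1
    rw [Matrix.mul_assoc, ← Matrix.mulVec_mulVec, ← Matrix.mulVec_mulVec, ← hx,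
      Matrix.sub_mulVec, Matrix.one_mulVec, Matrix.smul_mulVec,
      ← Matrix.mulVec_mulVec, hJx, Matrix.mulVec_smul, hsx, hu, smul_smul]
  have hsc : β⁻¹ * (1 - α⁻¹ * β) = β⁻¹ - α⁻¹ := by
    field_simp
  have hΔ : Δc = β⁻¹ • u - cstar := by
    rw [eq_sub_iff_add_eq, add_comm]; exact hdchar
  rw [hΔ, hrhs, hsc, hxval, hcchar]
  module
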